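/- For η ∈ I_n define permutations of {1,…,n} recursively by p_η^{[n]} := id and p_η^{[i]} := p_η^{[i+1]}∘(i, (p_η^{[i+1]})⁻¹(η(i))) for i = n−1, n−2, …, 1, and set p_η := p_η^{[1]}. Then for arbitrary n×n matrices C_1,…,C_n over A, ⟨⟨C_1,…,C_n⟩⟩ = ∑_{η∈I_n} α(η)·P_{p_η⁻¹}·C_1^(η(1))·C_2^(η(2))⋯C_n^(η(n)). -/

import Mathlib

/-!
STATEMENT 10: With p_η defined recursively by p_η^{[n]} = id,
p_η^{[i]} = p_η^{[i+1]}∘(i, (p_η^{[i+1]})⁻¹(η(i))) and p_η := p_η^{[1]},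
⟨⟨C_1,…,C_n⟩⟩ = ∑_{η∈I_n} α(η)·P_{p_η⁻¹}·C_1^(η(1))⋯C_n^(η(n)).
The point `i : Fin n` carries the label `i+1 ∈ {1,…,n}`.
-/

noncomputable section

abbrev K : Type := RatFunc ℚ

def u : K := RatFunc.X

/-- Operators on the n-fold tensor power of K^n with coefficients in A. -/
abbrev Op (A : Type*) (n : ℕ) := Matrix (Fin n → Fin n) (Fin n → Fin n) A

variable {A : Type*} [Ring A] [Algebra K A] {n : ℕ}

/-- `act C s` = C^(s): the matrix C acting on the s-th tensor factor. -/
def act (C : Matrix (Fin n) (Fin n) A) (s : Fin n) : Op A n :=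
  fun f g => if ∀ t, t ≠ s → f t = g t then C (f s) (g s) else 0

/-- `Pop σ` = P_σ: permutation of the tensor factors according to σ. -/
def Pop (σ : Equiv.Perm (Fin n)) : Op A n :=
  fun f g => if f = g ∘ ⇑σ⁻¹ then (1 : A) else 0

/-- P_{ij} (with P_{ii} = Id). -/
def Pij (i j : Fin n) : Op A n := Pop (Equiv.swap i j)

/-- Π_k = 1 − (2u−k−n+2)⁻¹ ∑_{i=k+1}^n P_{ki}, with label k+1. -/
def Piop (k : Fin n) : Op A n :=
  (1 : Op A n) -
    ((2 * u - ((k : ℕ) + 1 : K) - (n : K) + 2)⁻¹ : K) •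
      ∑ i ∈ Finset.univ.filter (fun i => k < i), Pij k i

/-- ⟨⟨C_1,…,C_n⟩⟩ = C_1^(1)·Π_1·C_2^(2)·Π_2⋯Π_{n−1}·C_n^(n). -/
def braket (C : Fin n → Matrix (Fin n) (Fin n) A) : Op A n :=
  ((List.finRange n).map (fun s => act (C s) s * Piop s)).prod

/-- I_n: the tuples η with i ≤ η(i) for all i. -/
def In (n : ℕ) : Finset (Fin n → Fin n) :=
  Finset.univ.filter (fun η => ∀ i, i ≤ η i)

/-- α(η) = ∏_{i : i < η(i)} (n−2u−2+i)⁻¹, with label i+1. -/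
def alphaK (η : Fin n → Fin n) : K :=
  ∏ i ∈ Finset.univ.filter (fun i => i < η i), ((n : K) - 2 * u - 2 + ((i : ℕ) + 1 : K))⁻¹

/-- `pAux η t` = p_η^{[n−t]}: p_η^{[n]} = id and
p_η^{[i]} = p_η^{[i+1]}∘(i, (p_η^{[i+1]})⁻¹(η(i))); the point of `Fin n` with
value `n−2−t` carries the label `n−t−1`. (For n ≥ 1 the guard always holds.) -/
def pAux (η : Fin n → Fin n) : ℕ → Equiv.Perm (Fin n)
  | 0 => 1
  | t + 1 =>
    let prev := pAux η t
    if h : n - 2 - t < n then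
      prev * Equiv.swap ⟨n - 2 - t, h⟩ (prev⁻¹ (η ⟨n - 2 - t, h⟩))
    else prev

/-- p_η = p_η^{[1]}. -/
def pEta (η : Fin n → Fin n) : Equiv.Perm (Fin n) := pAux η (n - 1)

/-! ### Auxiliary material for the proof -/

theorem Equiv.Perm.apply_inv_self {α : Type*} (f : Equiv.Perm α) (x : α) : f (f⁻¹ x) = x :=
  f.apply_symm_apply x

theorem Equiv.Perm.inv_apply_self {α : Type*} (f : Equiv.Perm α) (x : α) : f⁻¹ (f x) = x :=
  f.symm_apply_apply x

set_option linter.unusedSectionVars false in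
lemma comp_cancel (f : Fin n → Fin n) (σ : Equiv.Perm (Fin n)) :
    (f ∘ ⇑σ) ∘ ⇑σ⁻¹ = f := by funext x; simp

set_option linter.unusedSectionVars false in
lemma Pop_one : (Pop 1 : Op A n) = 1 := by
  ext f g
  simp only [Pop, inv_one, Equiv.Perm.coe_one, Function.comp_id, Matrix.one_apply]

set_option linter.unusedSectionVars false in
lemma Pop_mul (σ ρ : Equiv.Perm (Fin n)) : (Pop σ * Pop ρ : Op A n) = Pop (σ * ρ) := by
  ext f g
  rw [Matrix.mul_apply, Finset.sum_eq_single (f ∘ ⇑σ)]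
  · have h1 : (Pop σ f (f ∘ ⇑σ) : A) = 1 := by
      show (if f = (f ∘ ⇑σ) ∘ ⇑σ⁻¹ then (1 : A) else 0) = 1
      rw [comp_cancel, if_pos rfl]
    rw [h1, one_mul]
    simp only [Pop, mul_inv_rev]
    congr 1
    simp only [eq_iff_iff]
    constructor
    · intro h
      funext x
      have := congrFun h (σ⁻¹ x)
      simpa using this
    · intro h
      funext x
      have := congrFun h (σ x)
      simpa using this
  · intro h _ hne
    have : ¬ (f = h ∘ ⇑σ⁻¹) := by
      intro hh
      apply hne
      funext x
      have := congrFun hh (σ x)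
      simpa using this.symm
    simp only [Pop, if_neg this, zero_mul]
  · simp

set_option linter.unusedSectionVars false in
lemma act_Pop (C : Matrix (Fin n) (Fin n) A) (s : Fin n) (σ : Equiv.Perm (Fin n)) :
    act C s * Pop σ = Pop σ * act C (σ⁻¹ s) := by
  ext f g
  rw [Matrix.mul_apply, Matrix.mul_apply,
    Finset.sum_eq_single (g ∘ ⇑σ⁻¹), Finset.sum_eq_single (f ∘ ⇑σ)]
  · have h1 : (Pop σ f (f ∘ ⇑σ) : A) = 1 := by
      show (if f = (f ∘ ⇑σ) ∘ ⇑σ⁻¹ then (1 : A) else 0) = 1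
      rw [comp_cancel, if_pos rfl]
    have h2 : (Pop σ (g ∘ ⇑σ⁻¹) g : A) = 1 := by simp [Pop]
    rw [h1, h2, one_mul, mul_one]
    simp only [act, Function.comp_apply, Equiv.Perm.apply_inv_self]
    refine if_congr ?_ rfl rfl
    constructor
    · intro h t ht
      have hst : σ t ≠ s := fun hh => ht (by rw [← hh]; simp)
      have := h (σ t) hst
      simpa using this
    · intro h t ht
      have hst : σ⁻¹ t ≠ σ⁻¹ s := fun hh => ht (by
        have := congrArg σ hh; simpa using this)
      have := h (σ⁻¹ t) hst
      simpa using this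
  · intro h _ hne
    have : (Pop σ f h : A) = 0 := by
      simp only [Pop, ite_eq_right_iff]
      intro hh
      exact absurd (by funext x; have := congrFun hh (σ x); simpa using this.symm) hne
    rw [this, zero_mul]
  · intro h
    exact absurd (Finset.mem_univ _) h
  · intro h _ hne
    have : (Pop σ h g : A) = 0 := by
      simp only [Pop, ite_eq_right_iff]
      intro hh; exact absurd hh hne
    rw [this, mul_zero]
  · simp

/-- weight in the expansion of Piop -/
def wgt (k j : Fin n) : K :=
  if k < j then ((n : K) - 2 * u - 2 + ((k : ℕ) + 1 : K))⁻¹ else 1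

lemma wgt_eq (k : Fin n) (j : Fin n) (h : k < j) :
    wgt k j = -((2 * u - ((k : ℕ) + 1 : K) - (n : K) + 2)⁻¹ : K) := by
  rw [wgt, if_pos h, ← inv_neg]
  congr 1
  ring

lemma Piop_expand (k : Fin n) :
    (Piop k : Op A n) =
      ∑ j ∈ Finset.univ.filter (fun j => k ≤ j), wgt k j • Pop (Equiv.swap k j) := by
  have hset : Finset.univ.filter (fun j => k ≤ j) =
      insert k (Finset.univ.filter (fun j => k < j)) := by
    ext x
    simp [le_iff_lt_or_eq, eq_comm, or_comm]
  rw [hset, Finset.sum_insert (by simp)]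
  have h1 : wgt k k • Pop (Equiv.swap k k) = (1 : Op A n) := by
    rw [wgt, if_neg (lt_irrefl k), Equiv.swap_self,
      show (Equiv.refl (Fin n)) = (1 : Equiv.Perm (Fin n)) from rfl, Pop_one, one_smul]
  rw [h1, Piop, sub_eq_add_neg, ← neg_smul, Finset.smul_sum]
  congr 1
  apply Finset.sum_congr rfl
  intro j hj
  rw [Finset.mem_filter] at hj
  rw [wgt_eq k j hj.2]
  rfl

lemma alphaK_update (η' : Fin n → Fin n) (kk : Fin n) (j' : Fin n)
    (hk : η' kk = kk) (hj : kk ≤ j') :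
    alphaK (Function.update η' kk j') = wgt kk j' * alphaK η' := by
  by_cases h : kk < j'
  · have hset : Finset.univ.filter (fun i => i < Function.update η' kk j' i) =
        insert kk (Finset.univ.filter (fun i => i < η' i)) := by
      ext x
      simp only [Finset.mem_filter, Finset.mem_univ, true_and, Finset.mem_insert]
      by_cases hx : x = kk
      · subst hx
        simp [Function.update_self, h, hk]
      · rw [Function.update_of_ne hx]
        simp only [hx, false_or]
    have hkk : kk ∉ Finset.univ.filter (fun i => i < η' i) := by
      simp [hk]
    rw [alphaK, hset, Finset.prod_insert hkk, wgt, if_pos h]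
    rfl
  · have hj' : j' = kk := le_antisymm (not_lt.mp h) hj
    subst hj'
    have hupd : Function.update η' j' j' = η' := by
      nth_rewrite 2 [← hk]
      exact Function.update_eq_self _ _
    rw [hupd, wgt, if_neg h, one_mul]

/-- The p-recursion reindexed: `pD η d` = p_η^{[n−d+1]} (0-based: fixes the first n−d points). -/
def pD (η : Fin n → Fin n) : ℕ → Equiv.Perm (Fin n)
  | 0 => 1
  | d + 1 =>
    if h : n - (d + 1) < n then
      pD η d * Equiv.swap ⟨n - (d + 1), h⟩ ((pD η d)⁻¹ (η ⟨n - (d + 1), h⟩))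
    else pD η d

lemma pD_succ (η : Fin n → Fin n) (d : ℕ) (h : n - (d + 1) < n) :
    pD η (d + 1) = pD η d * Equiv.swap ⟨n - (d + 1), h⟩ ((pD η d)⁻¹ (η ⟨n - (d + 1), h⟩)) := by
  rw [pD, dif_pos h]

/-- pD η d fixes all points with value < n - d. -/
lemma pD_fix (η : Fin n → Fin n) (hη : ∀ i, i ≤ η i) :
    ∀ d, ∀ x : Fin n, (x : ℕ) < n - d → pD η d x = x := by
  intro d
  induction d with
  | zero => intro x _; rfl
  | succ d ih =>
    intro x hx
    have hn : n - (d + 1) < n := by omega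
    rw [pD_succ η d hn]
    have hxd : (x : ℕ) < n - d := by omega
    have haa : ((⟨n - (d + 1), hn⟩ : Fin n) : ℕ) = n - (d + 1) := rfl
    have hxa : x ≠ ⟨n - (d + 1), hn⟩ := by
      intro hh; rw [hh] at hx; rw [haa] at hx; omega
    have hxb : x ≠ (pD η d)⁻¹ (η ⟨n - (d + 1), hn⟩) := by
      intro hh
      have h0 : pD η d x = η ⟨n - (d + 1), hn⟩ := by rw [hh]; simp
      rw [ih x hxd] at h0
      have h1 : ((⟨n - (d + 1), hn⟩ : Fin n) : ℕ) ≤ ((η ⟨n - (d + 1), hn⟩ : Fin n) : ℕ) :=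
        Fin.le_def.mp (hη ⟨n - (d + 1), hn⟩)
      have h2 : (x : ℕ) = ((η ⟨n - (d + 1), hn⟩ : Fin n) : ℕ) := by rw [h0]
      rw [haa] at h1
      omega
    simp only [Equiv.Perm.mul_apply]
    rw [Equiv.swap_apply_of_ne_of_ne hxa hxb]
    exact ih x hxd

lemma pD_fix_inv (η : Fin n → Fin n) (hη : ∀ i, i ≤ η i) (d : ℕ) (x : Fin n)
    (hx : (x : ℕ) < n - d) : (pD η d)⁻¹ x = x := by
  have h := pD_fix η hη d x hx
  nth_rewrite 1 [← h]
  simp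

lemma pD_lt_iff (η : Fin n → Fin n) (hη : ∀ i, i ≤ η i) (d : ℕ) (x : Fin n) :
    ((pD η d x : ℕ) < n - d) ↔ ((x : ℕ) < n - d) := by
  constructor
  · intro h
    have := pD_fix η hη d _ h
    have := (pD η d).injective this
    omega
  · intro h; rw [pD_fix η hη d x h]; exact h

lemma pD_inv_lt_iff (η : Fin n → Fin n) (hη : ∀ i, i ≤ η i) (d : ℕ) (x : Fin n) :
    (((pD η d)⁻¹ x : ℕ) < n - d) ↔ ((x : ℕ) < n - d) := by
  constructor
  · intro h
    have := pD_fix η hη d _ h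
    simp only [Equiv.Perm.apply_inv_self] at this
    omega
  · intro h; rw [pD_fix_inv η hη d x h]; exact h

lemma pD_congr (η₁ η₂ : Fin n → Fin n) :
    ∀ d, (∀ i : Fin n, n - d ≤ (i : ℕ) → η₁ i = η₂ i) → pD η₁ d = pD η₂ d := by
  intro d
  induction d with
  | zero => intro _; rfl
  | succ d ih =>
    intro h
    have h' : ∀ i : Fin n, n - d ≤ (i : ℕ) → η₁ i = η₂ i := by
      intro i hi; exact h i (by omega)
    by_cases hn : n - (d + 1) < n
    · rw [pD_succ η₁ d hn, pD_succ η₂ d hn, ih h', h _ (by simp)]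
    · rw [pD, pD, dif_neg hn, dif_neg hn, ih h']

/-- pD agrees with pAux: pD η d = pAux η (d-1) for η ∈ I_n. -/
lemma pD_eq_pAux (η : Fin n → Fin n) (hη : ∀ i, i ≤ η i) :
    ∀ d, pD η d = pAux η (d - 1) := by
  intro d
  induction d with
  | zero => rfl
  | succ d ih =>
    match d, ih with
    | 0, _ =>
      by_cases hn : n - 1 < n
      · rw [pD_succ η 0 hn]
        have : η ⟨n - 1, hn⟩ = ⟨n - 1, hn⟩ := by
          have h1 : ((⟨n - 1, hn⟩ : Fin n) : ℕ) ≤ ((η ⟨n - 1, hn⟩ : Fin n) : ℕ) :=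
            Fin.le_def.mp (hη ⟨n - 1, hn⟩)
          have h2 : (η ⟨n - 1, hn⟩ : ℕ) < n := (η ⟨n - 1, hn⟩).isLt
          have haa : ((⟨n - 1, hn⟩ : Fin n) : ℕ) = n - 1 := rfl
          apply Fin.ext
          rw [haa] at h1 ⊢
          omega
        rw [this, show pD η 0 = 1 from rfl, inv_one,
          show ((1 : Equiv.Perm (Fin n)) ⟨n - 1, hn⟩) = ⟨n - 1, hn⟩ from rfl,
          Equiv.swap_self]
        show (1 : Equiv.Perm (Fin n)) * 1 = pAux η 0
        rw [mul_one]
        rfl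
      · rw [pD, dif_neg hn]; rfl
    | d + 1, ih =>
      have hd : d + 1 + 1 - 1 = (d + 1 - 1) + 1 := rfl
      rw [hd, pAux]
      have harith : n - 2 - (d + 1 - 1) = n - (d + 1 + 1) := by omega
      by_cases hn : n - (d + 1 + 1) < n
      · rw [pD_succ η (d + 1) hn]
        have hn2 : n - 2 - (d + 1 - 1) < n := by omega
        rw [dif_pos hn2, ← ih]
        congr 1 <;> simp only [harith]
      · rw [pD, dif_neg hn, ih]
        have hn2 : ¬ (n - 2 - (d + 1 - 1) < n) := by omega
        rw [dif_neg hn2]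

lemma finRange_drop (k : ℕ) (hk : k < n) :
    (List.finRange n).drop k = ⟨k, hk⟩ :: (List.finRange n).drop (k + 1) := by
  have h : k < (List.finRange n).length := by simpa using hk
  rw [List.drop_eq_getElem_cons h]
  congr 1
  simp [List.getElem_finRange, Fin.cast]

lemma mem_drop_finRange (m : ℕ) (s : Fin n) (hs : s ∈ (List.finRange n).drop m) :
    m ≤ (s : ℕ) := by
  rw [List.mem_iff_getElem] at hs
  obtain ⟨i, hi, hgi⟩ := hs
  rw [List.getElem_drop] at hgi
  have : (s : ℕ) = m + i := by
    rw [← hgi]; simp [List.getElem_finRange, Fin.cast]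
  omega


set_option linter.unusedSectionVars false in
set_option maxHeartbeats 1000000 in
lemma suffix_sum (C : Fin n → Matrix (Fin n) (Fin n) A) :
    ∀ d, d ≤ n →
    (((List.finRange n).drop (n - d)).map (fun s => act (C s) s * Piop s)).prod =
      ∑ η ∈ (In n).filter (fun η => ∀ i : Fin n, (i : ℕ) < n - d → η i = i),
        alphaK η • (Pop (pD η d)⁻¹ *
          (((List.finRange n).drop (n - d)).map (fun s => act (C s) (η s))).prod) := by
  intro d
  induction d with
  | zero =>
    intro _
    have hdrop : (List.finRange n).drop (n - 0) = ([] : List (Fin n)) := by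
      apply List.drop_eq_nil_of_le
      simp
    have hset : (In n).filter (fun η => ∀ i : Fin n, (i : ℕ) < n - 0 → η i = i)
        = {fun i => i} := by
      ext η
      simp only [In, Finset.mem_filter, Finset.mem_univ, true_and, Finset.mem_singleton]
      constructor
      · rintro ⟨h1, h2⟩
        funext i
        exact h2 i (by simpa using i.isLt)
      · rintro rfl
        exact ⟨fun i => le_refl i, fun i _ => rfl⟩
    rw [hdrop, hset, Finset.sum_singleton]
    have halpha : alphaK (fun i : Fin n => i) = 1 := by
      rw [alphaK, Finset.filter_false_of_mem, Finset.prod_empty]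
      intro i _
      exact lt_irrefl i
    simp [halpha, show pD (fun i : Fin n => i) 0 = 1 from rfl, Pop_one]
  | succ d ih =>
    intro hd
    have hk : n - (d + 1) < n := by omega
    have hnd : n - d = n - (d + 1) + 1 := by omega
    set kK : Fin n := ⟨n - (d + 1), hk⟩ with hkK
    have hkKc : (kK : ℕ) = n - (d + 1) := rfl
    have IH := ih (by omega)
    rw [hnd] at IH
    have hdrop := finRange_drop (n := n) (n - (d + 1)) hk
    rw [← hkK] at hdrop
    simp only [hdrop, List.map_cons, List.prod_cons]
    rw [IH, Piop_expand]
    -- abbreviations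
    have key : ∀ (j : Fin n) (η' : Fin n → Fin n),
        (act (C kK) kK * (wgt kK j • Pop (Equiv.swap kK j))) *
          (alphaK η' • (Pop (pD η' d)⁻¹ *
            (((List.finRange n).drop (n - (d + 1) + 1)).map (fun s => act (C s) (η' s))).prod))
        = (wgt kK j * alphaK η') •
            (Pop (Equiv.swap kK j * (pD η' d)⁻¹) *
              (act (C kK) ((pD η' d) j) *
                (((List.finRange n).drop (n - (d + 1) + 1)).map
                  (fun s => act (C s) (η' s))).prod)) := by
      intro j η'
      simp only [mul_smul_comm, smul_mul_assoc, smul_smul]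
      rw [mul_comm (alphaK η') (wgt kK j)]
      congr 1
      have hσ : (Equiv.swap kK j * (pD η' d)⁻¹)⁻¹ kK = pD η' d j := by
        rw [mul_inv_rev, inv_inv, Equiv.swap_inv, Equiv.Perm.mul_apply, Equiv.swap_apply_left]
      rw [mul_assoc, ← mul_assoc (Pop (Equiv.swap kK j)), Pop_mul, ← mul_assoc, act_Pop,
        hσ, mul_assoc]
    calc (act (C kK) kK * ∑ j ∈ Finset.univ.filter (fun j => kK ≤ j),
            wgt kK j • Pop (Equiv.swap kK j)) *
          (∑ η' ∈ (In n).filter (fun η => ∀ i : Fin n, (i : ℕ) < n - (d + 1) + 1 → η i = i),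
            alphaK η' • (Pop (pD η' d)⁻¹ *
              (((List.finRange n).drop (n - (d + 1) + 1)).map
                (fun s => act (C s) (η' s))).prod))
        = ∑ j ∈ Finset.univ.filter (fun j => kK ≤ j),
            ∑ η' ∈ (In n).filter (fun η => ∀ i : Fin n, (i : ℕ) < n - (d + 1) + 1 → η i = i),
            (wgt kK j * alphaK η') •
              (Pop (Equiv.swap kK j * (pD η' d)⁻¹) *
                (act (C kK) ((pD η' d) j) *
                  (((List.finRange n).drop (n - (d + 1) + 1)).map
                    (fun s => act (C s) (η' s))).prod)) := by
          simp only [Finset.mul_sum, Finset.sum_mul]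
          rw [Finset.sum_comm]
          refine Finset.sum_congr rfl fun j _ => ?_
          refine Finset.sum_congr rfl fun η' _ => ?_
          exact key j η'
      _ = ∑ p ∈ (Finset.univ.filter (fun j => kK ≤ j)) ×ˢ
              ((In n).filter (fun η => ∀ i : Fin n, (i : ℕ) < n - (d + 1) + 1 → η i = i)),
            (wgt kK p.1 * alphaK p.2) •
              (Pop (Equiv.swap kK p.1 * (pD p.2 d)⁻¹) *
                (act (C kK) ((pD p.2 d) p.1) *
                  (((List.finRange n).drop (n - (d + 1) + 1)).map
                    (fun s => act (C s) (p.2 s))).prod)) := by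
          rw [Finset.sum_product]
      _ = ∑ η ∈ (In n).filter (fun η => ∀ i : Fin n, (i : ℕ) < n - (d + 1) → η i = i),
            alphaK η • (Pop (pD η (d + 1))⁻¹ *
              (act (C kK) (η kK) *
                (((List.finRange n).drop (n - (d + 1) + 1)).map
                  (fun s => act (C s) (η s))).prod)) := by
          refine Finset.sum_nbij'
            (fun p => Function.update p.2 kK ((pD p.2 d) p.1))
            (fun η => ((pD (Function.update η kK kK) d)⁻¹ (η kK), Function.update η kK kK))
            ?_ ?_ ?_ ?_ ?_
          · -- forward membership
            rintro ⟨j, η'⟩ hp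
            rw [Finset.mem_product, Finset.mem_filter, Finset.mem_filter, In,
              Finset.mem_filter] at hp
            obtain ⟨⟨_, hj⟩, ⟨⟨_, hIn⟩, hfix⟩⟩ := hp
            dsimp only at hj hIn hfix ⊢
            have hge : kK ≤ pD η' d j := by
              by_cases hc : (j : ℕ) < n - (d + 1) + 1
              · have hjeq : pD η' d j = j := pD_fix η' hIn d j (by omega)
                rw [hjeq]; exact hj
              · have h1 : ¬ ((pD η' d j : ℕ) < n - d) := by
                  rw [pD_lt_iff η' hIn d j]; omega
                rw [Fin.le_def, hkKc]; omega
            rw [Finset.mem_filter, In, Finset.mem_filter]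
            refine ⟨⟨Finset.mem_univ _, ?_⟩, ?_⟩
            · intro i
              by_cases hi : i = kK
              · subst hi; rw [Function.update_self]; exact hge
              · rw [Function.update_of_ne hi]; exact hIn i
            · intro i hi
              have hi' : i ≠ kK := by
                intro hh; rw [hh, hkKc] at hi; omega
              rw [Function.update_of_ne hi']
              exact hfix i (by omega)
          · -- backward membership
            intro η hη
            rw [Finset.mem_filter, In, Finset.mem_filter] at hη
            obtain ⟨⟨_, hIn⟩, hfix⟩ := hη
            have hIn'' : ∀ i, i ≤ Function.update η kK kK i := by
              intro i
              by_cases hi : i = kK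
              · subst hi; rw [Function.update_self]
              · rw [Function.update_of_ne hi]; exact hIn i
            rw [Finset.mem_product, Finset.mem_filter, Finset.mem_filter, In,
              Finset.mem_filter]
            dsimp only
            refine ⟨⟨Finset.mem_univ _, ?_⟩, ⟨⟨Finset.mem_univ _, hIn''⟩, ?_⟩⟩
            · -- kK ≤ jinv
              by_cases hc : ((η kK : Fin n) : ℕ) < n - (d + 1) + 1
              · have hη1 : ((kK : Fin n) : ℕ) ≤ ((η kK : Fin n) : ℕ) := Fin.le_def.mp (hIn kK)
                have heq : η kK = kK := by
                  apply Fin.ext; rw [hkKc]; rw [hkKc] at hη1; omega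
                rw [heq, pD_fix_inv _ hIn'' d kK (by rw [hkKc]; omega)]
              · have h1 : ¬ (((pD (Function.update η kK kK) d)⁻¹ (η kK) : ℕ) < n - d) := by
                  rw [pD_inv_lt_iff _ hIn'' d]; omega
                rw [Fin.le_def, hkKc]; omega
            · -- update η kK kK satisfies the S-condition
              intro i hi
              by_cases hii : i = kK
              · subst hii; rw [Function.update_self]
              · rw [Function.update_of_ne hii]
                have : (i : ℕ) ≠ n - (d + 1) := by
                  intro hh; exact hii (Fin.ext (by rw [hkKc, hh]))
                exact hfix i (by omega)
          · -- left inverse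
            rintro ⟨j, η'⟩ hp
            rw [Finset.mem_product, Finset.mem_filter, Finset.mem_filter, In,
              Finset.mem_filter] at hp
            obtain ⟨⟨_, hj⟩, ⟨⟨_, hIn⟩, hfix⟩⟩ := hp
            dsimp only at hj hIn hfix ⊢
            have h1 : Function.update (Function.update η' kK ((pD η' d) j)) kK kK = η' := by
              rw [Function.update_idem]
              nth_rewrite 2 [← hfix kK (by rw [hkKc]; omega)]
              exact Function.update_eq_self _ _
            simp only [Prod.mk.injEq]
            constructor
            · rw [h1, Function.update_self, Equiv.Perm.inv_apply_self]
            · exact h1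
          · -- right inverse
            intro η hη
            dsimp only
            rw [Equiv.Perm.apply_inv_self, Function.update_idem]
            exact Function.update_eq_self _ _
          · -- values
            rintro ⟨j, η'⟩ hp
            rw [Finset.mem_product, Finset.mem_filter, Finset.mem_filter, In,
              Finset.mem_filter] at hp
            obtain ⟨⟨_, hj⟩, ⟨⟨_, hIn⟩, hfix⟩⟩ := hp
            dsimp only at hj hIn hfix ⊢
            have hge : kK ≤ pD η' d j ∧ (kK < j ↔ kK < pD η' d j) := by
              by_cases hc : (j : ℕ) < n - (d + 1) + 1
              · have hjeq : pD η' d j = j := pD_fix η' hIn d j (by omega)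
                rw [hjeq]; exact ⟨hj, Iff.rfl⟩
              · have h1 : ¬ ((pD η' d j : ℕ) < n - d) := by
                  rw [pD_lt_iff η' hIn d j]; omega
                constructor
                · rw [Fin.le_def, hkKc]; omega
                · rw [Fin.lt_def, Fin.lt_def, hkKc]
                  constructor <;> intro <;> omega
            have hcongr : pD (Function.update η' kK ((pD η' d) j)) d = pD η' d := by
              apply pD_congr
              intro i hi
              apply Function.update_of_ne
              intro hh; rw [hh, hkKc] at hi; omega
            have hPop : (pD (Function.update η' kK ((pD η' d) j)) (d + 1))⁻¹
                = Equiv.swap kK j * (pD η' d)⁻¹ := by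
              rw [pD_succ _ d hk, ← hkK, hcongr, Function.update_self,
                Equiv.Perm.inv_apply_self, mul_inv_rev, Equiv.swap_inv]
            have halpha : alphaK (Function.update η' kK ((pD η' d) j)) = wgt kK j * alphaK η' := by
              rw [alphaK_update η' kK ((pD η' d) j) (hfix kK (by rw [hkKc]; omega)) hge.1]
              congr 1
              simp only [wgt]
              exact if_congr hge.2.symm rfl rfl
            have hRest : (((List.finRange n).drop (n - (d + 1) + 1)).map
                  (fun s => act (C s) ((Function.update η' kK ((pD η' d) j)) s)))
                = ((List.finRange n).drop (n - (d + 1) + 1)).map (fun s => act (C s) (η' s)) := by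
              apply List.map_congr_left
              intro s hs
              have hms := mem_drop_finRange _ s hs
              rw [Function.update_of_ne]
              intro hh; rw [hh, hkKc] at hms; omega
            rw [halpha, hPop, Function.update_self, hRest]

theorem braket_eq_sum_pEta (hn : 1 ≤ n) (C : Fin n → Matrix (Fin n) (Fin n) A) :
    braket C =
      ∑ η ∈ In n, alphaK η •
        (Pop (pEta η)⁻¹ * ((List.finRange n).map (fun s => act (C s) (η s))).prod) := by
  have h := suffix_sum C n le_rfl
  rw [Nat.sub_self, List.drop_zero] at h
  rw [braket, h]
  apply Finset.sum_congr
  · ext η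
    simp [Nat.sub_self]
  · intro η hη
    rw [In, Finset.mem_filter] at hη
    rw [pEta, ← pD_eq_pAux η hη.2 n]

end
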